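/- Let L be a finite-dimensional filiform Lie algebra over a field F of characteristic different from 2. If L is a CB-algebra, then dim L ≤ 3. -/

import Mathlib

/-- A finite-dimensional filiform Lie algebra (a nilpotent Lie algebra of
dimension `n` with `dim Lⁱ = n - i` for all `i ≥ 2`, where `L¹ = L` and
`L^{i+1} = ⁅Lⁱ, L⁆`; note `Lⁱ = lowerCentralSeries F L L (i-1)`) over a field
of characteristic different from 2 which is a CB-algebra has dimension at
most 3. -/
theorem stmt_14 (F : Type*) [Field F] (h2 : (2 : F) ≠ 0)
    (L : Type*) [LieRing L] [LieAlgebra F L] [FiniteDimensional F L]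
    [LieRing.IsNilpotent L]
    (hfil : ∀ i : ℕ, 2 ≤ i →
      Module.finrank F (LieModule.lowerCentralSeries F L L (i - 1) : LieSubmodule F L L)
        = Module.finrank F L - i)
    (hcb : ∀ x y : L, ⁅x, y⁆ = 0 → ∀ z : L, ⁅⁅x, z⁆, y⁆ = 0) :
    Module.finrank F L ≤ 3 := by
  by_contra hn
  push_neg at hn
  set n := Module.finrank F L with hn_def
  -- (ad v)^2 = 0
  have H2 : ∀ v z : L, ⁅v, ⁅v, z⁆⁆ = 0 := by
    intro v z
    have h := hcb v v (lie_self v) z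
    rw [← lie_skew, h, neg_zero]
  -- anticommutation
  have H3 : ∀ x y z : L, ⁅x, ⁅y, z⁆⁆ = -⁅y, ⁅x, z⁆⁆ := by
    intro x y z
    have h := H2 (x + y) z
    simp only [add_lie, lie_add, H2 x z, H2 y z, zero_add, add_zero] at h
    rw [add_comm] at h
    exact eq_neg_of_add_eq_zero_left h
  -- double bracket rewriting
  have Hlie2 : ∀ a b c : L, ⁅⁅a, b⁆, c⁆ = ⁅a, ⁅b, c⁆⁆ + ⁅a, ⁅b, c⁆⁆ := by
    intro a b c
    rw [lie_lie, H3 b a c, sub_neg_eq_add]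
  -- L³ is central (first form)
  have H4 : ∀ a b c z : L, ⁅⁅⁅a, b⁆, c⁆, z⁆ = 0 := by
    intro a b c z
    rw [lie_lie, Hlie2 a b ⁅c, z⁆, Hlie2 a b z, lie_add, H3 c a ⁅b, z⁆, H3 c b z]
    simp only [lie_neg, neg_neg]
    abel
  -- L³ is central (second form); uses char ≠ 2
  have H5 : ∀ a b c z : L, ⁅⁅a, ⁅b, c⁆⁆, z⁆ = 0 := by
    intro a b c z
    have h4 := H4 a b c z
    rw [Hlie2 a b c, add_lie] at h4
    have h4' : (2 : F) • ⁅⁅a, ⁅b, c⁆⁆, z⁆ = 0 := by rw [two_smul]; exact h4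
    rcases smul_eq_zero.mp h4' with h | h
    · exact absurd h h2
    · exact h
  have H5' : ∀ a b c z : L, ⁅z, ⁅a, ⁅b, c⁆⁆⁆ = 0 := by
    intro a b c z
    rw [← lie_skew, H5, neg_zero]
  -- membership in L² gives span membership over brackets
  have mem_span : ∀ w : L, w ∈ LieModule.lowerCentralSeries F L L 1 →
      w ∈ Submodule.span F {m : L | ∃ x ∈ (⊤ : LieIdeal F L),
        ∃ c ∈ (⊤ : LieSubmodule F L L), ⁅x, c⁆ = m} := by
    intro w hw
    have h1 : LieModule.lowerCentralSeries F L L 1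
        = ⁅(⊤ : LieIdeal F L), (⊤ : LieSubmodule F L L)⁆ := by
      rw [show (1 : ℕ) = 0 + 1 from rfl, LieModule.lowerCentralSeries_succ,
        LieModule.lowerCentralSeries_zero]
    rw [h1, ← LieSubmodule.mem_toSubmodule,
      LieSubmodule.lieIdeal_oper_eq_linear_span'] at hw
    exact hw
  -- elements of L² sandwiched in double brackets vanish
  have K1 : ∀ w : L, w ∈ LieModule.lowerCentralSeries F L L 1 →
      ∀ y z : L, ⁅y, ⁅w, z⁆⁆ = 0 := by
    intro w hw y z
    have hsp := mem_span w hw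
    clear hw
    induction hsp using Submodule.span_induction with
    | mem m hm =>
      obtain ⟨p, -, q, -, rfl⟩ := hm
      rw [lie_lie, lie_sub, H5' p q z y, H5' q p z y, sub_zero]
    | zero => simp
    | add m₁ m₂ _ _ h₁ h₂ => rw [add_lie, lie_add, h₁, h₂, add_zero]
    | smul t m _ h => rw [smul_lie, lie_smul, h, smul_zero]
  have K2 : ∀ w : L, w ∈ LieModule.lowerCentralSeries F L L 1 →
      ∀ b c : L, ⁅w, ⁅b, c⁆⁆ = 0 := by
    intro w hw b c
    have hsp := mem_span w hw
    clear hw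
    induction hsp using Submodule.span_induction with
    | mem m hm =>
      obtain ⟨p, -, q, -, rfl⟩ := hm
      rw [lie_lie, H5' q b c p, H5' p b c q, sub_zero]
    | zero => simp
    | add m₁ m₂ _ _ h₁ h₂ => rw [add_lie, h₁, h₂, add_zero]
    | smul t m _ h => rw [smul_lie, h, smul_zero]
  -- dimension of L / L² is 2
  set S : Submodule F L := ((LieModule.lowerCentralSeries F L L 1 : LieSubmodule F L L) : Submodule F L) with hS_def
  have hS : Module.finrank F S = n - 2 := by
    have := hfil 2 le_rfl
    norm_num at this
    exact this
  have hq : Module.finrank F (L ⧸ S) = 2 := by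
    have h := Submodule.finrank_quotient_add_finrank S
    rw [hS] at h
    omega
  -- choose lifts u, v of a basis of L / L²
  let bQ := (Module.finBasis F (L ⧸ S)).reindex (finCongr hq)
  obtain ⟨u, hu⟩ := S.mkQ_surjective (bQ 0)
  obtain ⟨v, hv⟩ := S.mkQ_surjective (bQ 1)
  have hdec : ∀ a : L, ∃ α β : F, ∃ w : L,
      w ∈ LieModule.lowerCentralSeries F L L 1 ∧ a = α • u + β • v + w := by
    intro a
    refine ⟨bQ.repr (S.mkQ a) 0, bQ.repr (S.mkQ a) 1, a - (bQ.repr (S.mkQ a) 0 • u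
      + bQ.repr (S.mkQ a) 1 • v), ?_, by abel⟩
    have hmk : S.mkQ (a - (bQ.repr (S.mkQ a) 0 • u + bQ.repr (S.mkQ a) 1 • v)) = 0 := by
      have hs := bQ.sum_repr (S.mkQ a)
      rw [Fin.sum_univ_two] at hs
      simp only [map_sub, map_add, map_smul, hu, hv]
      rw [hs, sub_self]
    rw [Submodule.mkQ_apply, Submodule.Quotient.mk_eq_zero] at hmk
    exact hmk
  -- key computations
  have Kuv : ∀ z : L, ⁅u, ⁅v, z⁆⁆ = 0 := by
    intro z
    obtain ⟨α, β, w, hw, rfl⟩ := hdec z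
    have t1 : ⁅u, ⁅v, u⁆⁆ = 0 := by
      rw [← lie_skew v u, lie_neg, H2, neg_zero]
    have t3 : ⁅u, ⁅v, w⁆⁆ = 0 := by
      rw [← lie_skew v w, lie_neg, K1 w hw u v, neg_zero]
    simp [lie_add, lie_smul, t1, t3, H2]
  have Kvu : ∀ z : L, ⁅v, ⁅u, z⁆⁆ = 0 := by
    intro z
    rw [H3, Kuv, neg_zero]
  have Kmidu : ∀ y z : L, ⁅u, ⁅y, z⁆⁆ = 0 := by
    intro y z
    obtain ⟨α, β, w, hw, rfl⟩ := hdec y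
    simp [add_lie, smul_lie, lie_add, lie_smul, H2, Kuv, K1 w hw]
  have Kmidv : ∀ y z : L, ⁅v, ⁅y, z⁆⁆ = 0 := by
    intro y z
    obtain ⟨α, β, w, hw, rfl⟩ := hdec y
    simp [add_lie, smul_lie, lie_add, lie_smul, H2, Kvu, K1 w hw]
  have main : ∀ x y z : L, ⁅x, ⁅y, z⁆⁆ = 0 := by
    intro x y z
    obtain ⟨α, β, w, hw, rfl⟩ := hdec x
    simp [add_lie, smul_lie, Kmidu, Kmidv, K2 w hw]
  -- hence L³ = 0
  have hbot : LieModule.lowerCentralSeries F L L 2 = ⊥ := by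
    rw [show (2 : ℕ) = 1 + 1 from rfl, LieModule.lowerCentralSeries_succ]
    rw [eq_bot_iff]
    refine (LieSubmodule.lie_le_iff _ _ _).mpr ?_
    intro x _ m hm
    rw [LieSubmodule.mem_bot]
    have hsp := mem_span m hm
    clear hm
    induction hsp using Submodule.span_induction with
    | mem m' hm' =>
      obtain ⟨p, -, q, -, rfl⟩ := hm'
      exact main x p q
    | zero => simp
    | add m₁ m₂ _ _ h₁ h₂ => rw [lie_add, h₁, h₂, add_zero]
    | smul t m' _ h => rw [lie_smul, h, smul_zero]
  have h3 := hfil 3 (by norm_num)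
  rw [show (3 - 1 : ℕ) = 2 from rfl, hbot] at h3
  have hz : Module.finrank F (⊥ : LieSubmodule F L L) = 0 := finrank_bot F L
  omega
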